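/- arXiv:2602.24178 — 3 statements merged into one kernel-verified Lean document; each statement's English description precedes it below -/
import Mathlib

section
/- Let D be a probability distribution on ℝ^d and let f : ℝ^d → {−1, 1} be a concept with σ-smooth boundary with respect to D, where σ ≥ 1. Then for every ε ∈ (0,1) and every real s ≥ 1 there exist functions f_up, f_down : ℝ^d → [−1, 1] that are L-Lipschitz with L = 2σ(2/ε)^s and satisfy: (i) f_down(x) ≤ f(x) ≤ f_up(x) for every x ∈ ℝ^d, and (ii) ‖f_up − f_down‖_{D,s} ≤ ε. -/
open MeasureTheory Matrix

/-- A concept takes values in `{-1, 1}`. -/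
def IsConcept {d : ℕ} (f : EuclideanSpace ℝ (Fin d) → ℝ) : Prop :=
  ∀ x, f x = 1 ∨ f x = -1

/-- The `ρ`-dilation `f^{+ρ}(x) = sup_{‖z‖ ≤ ρ} f (x + z)`. -/
noncomputable def dilation {d : ℕ} (f : EuclideanSpace ℝ (Fin d) → ℝ) (ρ : ℝ)
    (x : EuclideanSpace ℝ (Fin d)) : ℝ :=
  sSup (f '' Metric.closedBall x ρ)

/-- The `ρ`-erosion `f^{-ρ}(x) = inf_{‖z‖ ≤ ρ} f (x + z)`. -/
noncomputable def erosion {d : ℕ} (f : EuclideanSpace ℝ (Fin d) → ℝ) (ρ : ℝ)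
    (x : EuclideanSpace ℝ (Fin d)) : ℝ :=
  sInf (f '' Metric.closedBall x ρ)

/-- `f` has `σ`-smooth boundary with respect to `D`:
`E_{x∼D}[(f^{+ρ}(x) − f^{−ρ}(x))/2] ≤ σρ` for all `ρ ≥ 0`. -/
def HasSmoothBoundary {d : ℕ} (f : EuclideanSpace ℝ (Fin d) → ℝ)
    (D : Measure (EuclideanSpace ℝ (Fin d))) (σ : ℝ) : Prop :=
  ∀ ρ : ℝ, 0 ≤ ρ →
    ∫⁻ x, ENNReal.ofReal ((dilation f ρ x - erosion f ρ x) / 2) ∂D ≤ ENNReal.ofReal (σ * ρ)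

/-- `D` is `γ`-strictly subexponential with parameters `α, β`. -/
def StrictlySubexponential {d : ℕ} (D : Measure (EuclideanSpace ℝ (Fin d)))
    (γ α β : ℝ) : Prop :=
  ∀ w : EuclideanSpace ℝ (Fin d), ‖w‖ = 1 → ∀ r : ℝ, 0 ≤ r →
    D {x | r ≤ |(inner ℝ w x : ℝ)|} ≤ ENNReal.ofReal (α * Real.exp (-β * r ^ (1 + γ)))

/-- `D` is `α`-anticoncentrated in every direction. -/
def Anticoncentrated {d : ℕ} (D : Measure (EuclideanSpace ℝ (Fin d))) (α : ℝ) : Prop :=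
  ∀ w : EuclideanSpace ℝ (Fin d), ‖w‖ = 1 → ∀ t r : ℝ, 0 ≤ r →
    D {x | |(inner ℝ w x : ℝ) - t| ≤ r} ≤ ENNReal.ofReal (α * r)

/-- The map `x ↦ W x` from `ℝ^d` to `ℝ^k`. -/
noncomputable def projMap {d k : ℕ} (W : Matrix (Fin k) (Fin d) ℝ)
    (x : EuclideanSpace ℝ (Fin d)) : EuclideanSpace ℝ (Fin k) :=
  (WithLp.equiv 2 (Fin k → ℝ)).symm (W.mulVec (WithLp.equiv 2 (Fin d → ℝ) x))

/-- `f` has intrinsic dimension `k`: `f(x) = F(Wx)` with `W Wᵀ = I`. -/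
def HasIntrinsicDim {d : ℕ} (f : EuclideanSpace ℝ (Fin d) → ℝ) (k : ℕ) : Prop :=
  ∃ (F : EuclideanSpace ℝ (Fin k) → ℝ) (W : Matrix (Fin k) (Fin d) ℝ),
    W * Wᵀ = 1 ∧ ∀ x, f x = F (projMap W x)

/-- Evaluation of a multivariate polynomial at a point of `ℝ^d`. -/
noncomputable def evalPoly {d : ℕ} (p : MvPolynomial (Fin d) ℝ)
    (x : EuclideanSpace ℝ (Fin d)) : ℝ :=
  MvPolynomial.eval (fun i => x i) p

/-- Sum of absolute values of the coefficients of `p`. -/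
noncomputable def coefNorm {d : ℕ} (p : MvPolynomial (Fin d) ℝ) : ℝ :=
  ∑ m ∈ p.support, |MvPolynomial.coeff m p|

/-- `pup, pdown` are `(ε, s)`-sandwiching polynomials of degree at most `ℓ` for `f` w.r.t. `D`. -/
def IsSandwiching {d : ℕ} (f : EuclideanSpace ℝ (Fin d) → ℝ)
    (D : Measure (EuclideanSpace ℝ (Fin d))) (ε s ℓ : ℝ)
    (pup pdown : MvPolynomial (Fin d) ℝ) : Prop :=
  (pup.totalDegree : ℝ) ≤ ℓ ∧ (pdown.totalDegree : ℝ) ≤ ℓ ∧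
  (∀ x, evalPoly pdown x ≤ f x ∧ f x ≤ evalPoly pup x) ∧
  eLpNorm (fun x => evalPoly pup x - evalPoly pdown x) (ENNReal.ofReal s) D ≤ ENNReal.ofReal ε

/-- The standard Gaussian measure on `ℝ^d`. -/
noncomputable def stdGaussian (d : ℕ) : Measure (EuclideanSpace ℝ (Fin d)) :=
  volume.withDensity fun x =>
    ENNReal.ofReal ((2 * Real.pi) ^ (-(d : ℝ) / 2) * Real.exp (-‖x‖ ^ 2 / 2))

/-- The halfspace concept `sign(w·x − t)`. -/
noncomputable def halfspaceSign {d : ℕ} (w : EuclideanSpace ℝ (Fin d)) (t : ℝ)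
    (x : EuclideanSpace ℝ (Fin d)) : ℝ :=
  if 0 ≤ (inner ℝ w x : ℝ) - t then 1 else -1

/-- The intersection of `k` halfspaces `2·Π_i 1{w_i·x ≤ τ_i} − 1`. -/
noncomputable def halfspaceIntersection {d k : ℕ} (w : Fin k → EuclideanSpace ℝ (Fin d))
    (τ : Fin k → ℝ) (x : EuclideanSpace ℝ (Fin d)) : ℝ :=
  2 * ∏ i, (if (inner ℝ (w i) x : ℝ) ≤ τ i then (1 : ℝ) else 0) - 1

/-- The low-dimensional convex-set concept `2·1_K(Wx) − 1`. -/
noncomputable def convexConcept {d k : ℕ} (K : Set (EuclideanSpace ℝ (Fin k)))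
    (W : Matrix (Fin k) (Fin d) ℝ) (x : EuclideanSpace ℝ (Fin d)) : ℝ :=
  2 * Set.indicator K (fun _ => (1 : ℝ)) (projMap W x) - 1

/-- The low-dimensional polynomial threshold function `sign(P(Wx))`. -/
noncomputable def ptfConcept {d k : ℕ} (P : MvPolynomial (Fin k) ℝ)
    (W : Matrix (Fin k) (Fin d) ℝ) (x : EuclideanSpace ℝ (Fin d)) : ℝ :=
  if 0 ≤ evalPoly P (projMap W x) then 1 else -1

/-- `D' ∈ MM_D(ℓ, Δ)`: all moments of multidegree at most `ℓ` exist and match up to `Δ`. -/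
def MomentMatching {d : ℕ} (D D' : Measure (EuclideanSpace ℝ (Fin d))) (ℓ : ℕ) (Δ : ℝ) : Prop :=
  ∀ I : Fin d → ℕ, (∑ i, I i) ≤ ℓ →
    Integrable (fun x => ∏ i, (x i) ^ I i) D ∧
    Integrable (fun x => ∏ i, (x i) ^ I i) D' ∧
    |(∫ x, ∏ i, (x i) ^ I i ∂D) - ∫ x, ∏ i, (x i) ^ I i ∂D'| ≤ Δ


section Helpers

variable {E : Type*} [MetricSpace E]

/-- Lipschitz bound for the upper envelope shape. -/
lemma lip_max_envelope (L : ℝ) (hL : 0 ≤ L) (S : Set E) :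
    LipschitzWith L.toNNReal (fun x => max (1 - L * Metric.infDist x S) (-1)) := by
  apply LipschitzWith.of_dist_le_mul
  intro x y
  have h1 : dist (max (1 - L * Metric.infDist x S) (-1))
      (max (1 - L * Metric.infDist y S) (-1)) ≤
      |(1 - L * Metric.infDist x S) - (1 - L * Metric.infDist y S)| := by
    rw [Real.dist_eq]; exact abs_max_sub_max_le_abs _ _ _
  have h2 : |(1 - L * Metric.infDist x S) - (1 - L * Metric.infDist y S)| =
      L * |Metric.infDist x S - Metric.infDist y S| := by
    rw [show (1 - L * Metric.infDist x S) - (1 - L * Metric.infDist y S)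
        = L * (Metric.infDist y S - Metric.infDist x S) by ring,
      abs_mul, abs_of_nonneg hL, abs_sub_comm]
  have h3 : |Metric.infDist x S - Metric.infDist y S| ≤ dist x y := by
    have := (Metric.lipschitz_infDist_pt S).dist_le_mul x y
    simpa [Real.dist_eq] using this
  calc dist (max (1 - L * Metric.infDist x S) (-1))
        (max (1 - L * Metric.infDist y S) (-1))
      ≤ L * |Metric.infDist x S - Metric.infDist y S| := by rw [← h2]; exact h1
    _ ≤ L * dist x y := by
        exact mul_le_mul_of_nonneg_left h3 hL
    _ = (L.toNNReal : ℝ) * dist x y := by rw [Real.coe_toNNReal L hL]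

lemma lip_min_envelope (L : ℝ) (hL : 0 ≤ L) (S : Set E) :
    LipschitzWith L.toNNReal (fun x => min (-1 + L * Metric.infDist x S) 1) := by
  apply LipschitzWith.of_dist_le_mul
  intro x y
  have h1 : dist (min (-1 + L * Metric.infDist x S) 1)
      (min (-1 + L * Metric.infDist y S) 1) ≤
      |(-1 + L * Metric.infDist x S) - (-1 + L * Metric.infDist y S)| := by
    rw [Real.dist_eq]
    have := abs_min_sub_min_le_max (-1 + L * Metric.infDist x S) 1
      (-1 + L * Metric.infDist y S) 1
    simpa using this
  have h2 : |(-1 + L * Metric.infDist x S) - (-1 + L * Metric.infDist y S)| =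
      L * |Metric.infDist x S - Metric.infDist y S| := by
    rw [show (-1 + L * Metric.infDist x S) - (-1 + L * Metric.infDist y S)
        = L * (Metric.infDist x S - Metric.infDist y S) by ring,
      abs_mul, abs_of_nonneg hL]
  have h3 : |Metric.infDist x S - Metric.infDist y S| ≤ dist x y := by
    have := (Metric.lipschitz_infDist_pt S).dist_le_mul x y
    simpa [Real.dist_eq] using this
  calc dist (min (-1 + L * Metric.infDist x S) 1)
        (min (-1 + L * Metric.infDist y S) 1)
      ≤ L * |Metric.infDist x S - Metric.infDist y S| := by rw [← h2]; exact h1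
    _ ≤ L * dist x y := mul_le_mul_of_nonneg_left h3 hL
    _ = (L.toNNReal : ℝ) * dist x y := by rw [Real.coe_toNNReal L hL]

lemma rpow_sandwich_aux {t Dx s : ℝ} (hs : 1 ≤ s) (ht0 : 0 ≤ t) (ht2 : t ≤ 2)
    (htD : t ≤ Dx) : t ^ s ≤ 2 ^ s * (Dx / 2) := by
  have hDx : 0 ≤ Dx := le_trans ht0 htD
  have h2s : (2 : ℝ) ^ s = 2 * 2 ^ (s - 1) := by
    rw [show s = 1 + (s - 1) by ring, Real.rpow_add (by norm_num), Real.rpow_one]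
    ring_nf
  rcases eq_or_lt_of_le ht0 with h0 | h0
  · rw [← h0, Real.zero_rpow (by linarith)]
    have : (0:ℝ) < 2 ^ (s-1) := Real.rpow_pos_of_pos (by norm_num) _
    nlinarith
  · have hts : t ^ s = t ^ (s - 1) * t := by
      have h := Real.rpow_add h0 (s - 1) 1
      rw [Real.rpow_one, sub_add_cancel] at h
      exact h
    have hle : t ^ (s - 1) ≤ 2 ^ (s - 1) :=
      Real.rpow_le_rpow ht0 ht2 (by linarith)
    have htp : 0 ≤ t ^ (s - 1) := Real.rpow_nonneg ht0 _
    calc t ^ s = t ^ (s - 1) * t := hts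
      _ ≤ 2 ^ (s - 1) * t := mul_le_mul_of_nonneg_right hle ht0
      _ ≤ 2 ^ (s - 1) * Dx := mul_le_mul_of_nonneg_left htD (by positivity)
      _ = 2 ^ s * (Dx / 2) := by rw [h2s]; ring

end Helpers

theorem statement_1 {d : ℕ} (D : Measure (EuclideanSpace ℝ (Fin d))) [IsProbabilityMeasure D]
    (σ : ℝ) (hσ : 1 ≤ σ) (f : EuclideanSpace ℝ (Fin d) → ℝ)
    (hf : IsConcept f) (hsb : HasSmoothBoundary f D σ)
    (ε s : ℝ) (hε0 : 0 < ε) (hε1 : ε < 1) (hs : 1 ≤ s) :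
    ∃ fup fdown : EuclideanSpace ℝ (Fin d) → ℝ,
      LipschitzWith (2 * σ * (2 / ε) ^ s).toNNReal fup ∧
      LipschitzWith (2 * σ * (2 / ε) ^ s).toNNReal fdown ∧
      (∀ x, fup x ∈ Set.Icc (-1 : ℝ) 1) ∧ (∀ x, fdown x ∈ Set.Icc (-1 : ℝ) 1) ∧
      (∀ x, fdown x ≤ f x ∧ f x ≤ fup x) ∧
      eLpNorm (fun x => fup x - fdown x) (ENNReal.ofReal s) D ≤ ENNReal.ofReal ε := by
  -- the Lipschitz constant
  have hσ0 : (0:ℝ) < σ := lt_of_lt_of_le one_pos hσ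
  have hrpos : (0:ℝ) < (2 / ε) ^ s := Real.rpow_pos_of_pos (by positivity) _
  set L : ℝ := 2 * σ * (2 / ε) ^ s with hLdef
  have hLpos : 0 < L := by positivity
  by_cases hp : ∃ a, f a = 1
  · by_cases hn : ∃ b, f b = -1
    · -- main case : both values attained
      obtain ⟨a, ha⟩ := hp
      obtain ⟨b, hb⟩ := hn
      set Sp : Set (EuclideanSpace ℝ (Fin d)) := {y | f y = 1} with hSpdef
      set Sn : Set (EuclideanSpace ℝ (Fin d)) := {y | f y = -1} with hSndef
      have hSpne : Sp.Nonempty := ⟨a, ha⟩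
      have hSnne : Sn.Nonempty := ⟨b, hb⟩
      set ρ : ℝ := 2 / L with hρdef
      have hρpos : 0 < ρ := by positivity
      have hLρ : L * ρ = 2 := by
        rw [hρdef]; field_simp
      set fup : EuclideanSpace ℝ (Fin d) → ℝ :=
        fun x => max (1 - L * Metric.infDist x Sp) (-1) with hfupdef
      set fdown : EuclideanSpace ℝ (Fin d) → ℝ :=
        fun x => min (-1 + L * Metric.infDist x Sn) 1 with hfdowndef
      have hupIcc : ∀ x, fup x ∈ Set.Icc (-1:ℝ) 1 := by
        intro x
        refine ⟨le_max_right _ _, max_le ?_ (by norm_num)⟩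
        have := mul_nonneg hLpos.le (Metric.infDist_nonneg (x := x) (s := Sp))
        linarith
      have hdownIcc : ∀ x, fdown x ∈ Set.Icc (-1:ℝ) 1 := by
        intro x
        refine ⟨le_min ?_ (by norm_num), min_le_right _ _⟩
        have := mul_nonneg hLpos.le (Metric.infDist_nonneg (x := x) (s := Sn))
        linarith
      have hsand : ∀ x, fdown x ≤ f x ∧ f x ≤ fup x := by
        intro x
        rcases hf x with h | h
        · constructor
          · rw [h]; exact min_le_right _ _
          · have hx : x ∈ Sp := h
            have h1 : fup x = 1 := by
              simp [hfupdef, Metric.infDist_zero_of_mem hx]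
            rw [h, h1]
        · constructor
          · have hx : x ∈ Sn := h
            have h1 : fdown x = -1 := by
              simp [hfdowndef, Metric.infDist_zero_of_mem hx]
            rw [h, h1]
          · rw [h]; exact le_max_right _ _
      have hinf : ∀ (S : Set (EuclideanSpace ℝ (Fin d))) (x), S.Nonempty →
          (∀ y ∈ Metric.closedBall x ρ, y ∉ S) → ρ ≤ Metric.infDist x S := by
        intro S x hS hdisj
        by_contra hlt
        push_neg at hlt
        obtain ⟨y, hyS, hyd⟩ := (Metric.infDist_lt_iff hS).mp hlt
        exact hdisj y (Metric.mem_closedBall.mpr (by rw [dist_comm]; exact hyd.le)) hyS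
      have hkey : ∀ x, fup x - fdown x ≤ dilation f ρ x - erosion f ρ x := by
        intro x
        have hxB : x ∈ Metric.closedBall x ρ := Metric.mem_closedBall_self hρpos.le
        have hne : (f '' Metric.closedBall x ρ).Nonempty := ⟨f x, x, hxB, rfl⟩
        have hbdda : BddAbove (f '' Metric.closedBall x ρ) := by
          refine ⟨1, ?_⟩
          rintro r ⟨y, -, rfl⟩
          rcases hf y with h | h <;> rw [h] <;> norm_num
        have hbddb : BddBelow (f '' Metric.closedBall x ρ) := by
          refine ⟨-1, ?_⟩
          rintro r ⟨y, -, rfl⟩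
          rcases hf y with h | h <;> rw [h] <;> norm_num
        by_cases h1 : ∃ y ∈ Metric.closedBall x ρ, f y = 1
        · by_cases h2 : ∃ y ∈ Metric.closedBall x ρ, f y = -1
          · have hdil : dilation f ρ x = 1 := by
              refine le_antisymm (csSup_le hne ?_) ?_
              · rintro r ⟨y, -, rfl⟩
                rcases hf y with h | h <;> rw [h] <;> norm_num
              · obtain ⟨y, hy, hy1⟩ := h1
                exact le_csSup hbdda ⟨y, hy, hy1⟩
            have hero : erosion f ρ x = -1 := by
              refine le_antisymm ?_ (le_csInf hne ?_)
              · obtain ⟨y, hy, hy1⟩ := h2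
                exact csInf_le hbddb ⟨y, hy, hy1⟩
              · rintro r ⟨y, -, rfl⟩
                rcases hf y with h | h <;> rw [h] <;> norm_num
            rw [hdil, hero]
            have hu := (hupIcc x).2
            have hd := (hdownIcc x).1
            linarith
          · have hall : ∀ y ∈ Metric.closedBall x ρ, f y = 1 :=
              fun y hy => (hf y).resolve_right (fun h => h2 ⟨y, hy, h⟩)
            have him : f '' Metric.closedBall x ρ = {1} := by
              apply Set.Subset.antisymm
              · rintro r ⟨y, hy, rfl⟩
                exact hall y hy
              · rintro r hr
                obtain ⟨y, hy, hy1⟩ := h1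
                exact hr ▸ ⟨y, hy, hy1⟩
            have hdil : dilation f ρ x = 1 := by rw [dilation, him, csSup_singleton]
            have hero : erosion f ρ x = 1 := by rw [erosion, him, csInf_singleton]
            have hdn : ρ ≤ Metric.infDist x Sn := by
              apply hinf Sn x hSnne
              intro y hy hyS
              have h3 := hall y hy
              have h4 : f y = -1 := hyS
              linarith
            have hmul := mul_le_mul_of_nonneg_left hdn hLpos.le
            have hfd : (1:ℝ) ≤ fdown x := le_min (by linarith) le_rfl
            have hu := (hupIcc x).2
            rw [hdil, hero]
            linarith
        · have hall : ∀ y ∈ Metric.closedBall x ρ, f y = -1 :=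
            fun y hy => (hf y).resolve_left (fun h => h1 ⟨y, hy, h⟩)
          have him : f '' Metric.closedBall x ρ = {-1} := by
            apply Set.Subset.antisymm
            · rintro r ⟨y, hy, rfl⟩
              exact hall y hy
            · rintro r hr
              exact hr ▸ ⟨x, hxB, hall x hxB⟩
          have hdil : dilation f ρ x = -1 := by rw [dilation, him, csSup_singleton]
          have hero : erosion f ρ x = -1 := by rw [erosion, him, csInf_singleton]
          have hdp : ρ ≤ Metric.infDist x Sp := by
            apply hinf Sp x hSpne
            intro y hy hyS
            have h3 := hall y hy
            have h4 : f y = 1 := hyS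
            linarith
          have hmul := mul_le_mul_of_nonneg_left hdp hLpos.le
          have hfu : fup x ≤ -1 := max_le (by linarith) le_rfl
          have hd := (hdownIcc x).1
          rw [hdil, hero]
          linarith
      refine ⟨fup, fdown, lip_max_envelope L hLpos.le Sp, lip_min_envelope L hLpos.le Sn,
        hupIcc, hdownIcc, hsand, ?_⟩
      -- the L^s bound
      have hs0 : (0:ℝ) < s := by linarith
      have hp0 : ENNReal.ofReal s ≠ 0 := by
        rw [Ne, ENNReal.ofReal_eq_zero]; push_neg; exact hs0
      have h2s : (0:ℝ) < 2 ^ s := Real.rpow_pos_of_pos (by norm_num) _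
      have hεs : (0:ℝ) < ε ^ s := Real.rpow_pos_of_pos hε0 _
      have hfinal : 2 ^ s * (σ * ρ) = ε ^ s := by
        have hds : ((2:ℝ) / ε) ^ s = 2 ^ s / ε ^ s := Real.div_rpow (by norm_num) hε0.le s
        rw [hρdef, hLdef, hds]
        field_simp
      rw [eLpNorm_eq_lintegral_rpow_enorm_toReal hp0 ENNReal.ofReal_ne_top,
        ENNReal.toReal_ofReal hs0.le]
      have hptw : ∀ x, ‖fup x - fdown x‖ₑ ^ s ≤
          ENNReal.ofReal (2 ^ s) *
            ENNReal.ofReal ((dilation f ρ x - erosion f ρ x) / 2) := by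
        intro x
        have ht0 : 0 ≤ fup x - fdown x := by
          have h := hsand x; linarith [h.1, h.2]
        have ht2 : fup x - fdown x ≤ 2 := by
          linarith [(hupIcc x).2, (hdownIcc x).1]
        rw [Real.enorm_eq_ofReal ht0, ENNReal.ofReal_rpow_of_nonneg ht0 hs0.le,
          ← ENNReal.ofReal_mul h2s.le]
        exact ENNReal.ofReal_le_ofReal (rpow_sandwich_aux hs ht0 ht2 (hkey x))
      calc (∫⁻ x, ‖fup x - fdown x‖ₑ ^ s ∂D) ^ (1 / s)
          ≤ (∫⁻ x, ENNReal.ofReal (2 ^ s) *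
              ENNReal.ofReal ((dilation f ρ x - erosion f ρ x) / 2) ∂D) ^ (1 / s) :=
            ENNReal.rpow_le_rpow (lintegral_mono hptw) (by positivity)
        _ ≤ (ENNReal.ofReal (2 ^ s) * ENNReal.ofReal (σ * ρ)) ^ (1 / s) := by
            rw [lintegral_const_mul' _ _ ENNReal.ofReal_ne_top]
            exact ENNReal.rpow_le_rpow
              (mul_le_mul_right (hsb ρ hρpos.le) _) (by positivity)
        _ = ENNReal.ofReal ε := by
            rw [← ENNReal.ofReal_mul h2s.le, hfinal,
              ENNReal.ofReal_rpow_of_nonneg hεs.le (by positivity),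
              ← Real.rpow_mul hε0.le, mul_one_div_cancel (ne_of_gt hs0),
              Real.rpow_one]
    · -- f is identically 1
      have hall : ∀ x, f x = 1 := fun x => (hf x).resolve_right (fun h => hn ⟨x, h⟩)
      refine ⟨fun _ => 1, fun _ => 1,
        (LipschitzWith.const 1).weaken zero_le,
        (LipschitzWith.const 1).weaken zero_le,
        fun _ => ⟨by norm_num, le_rfl⟩, fun _ => ⟨by norm_num, le_rfl⟩,
        fun x => by rw [hall x]; exact ⟨le_rfl, le_rfl⟩, ?_⟩
      have hz : (fun _ : EuclideanSpace ℝ (Fin d) => (1:ℝ) - 1) = 0 := by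
        funext; simp
      rw [hz, eLpNorm_zero]
      exact zero_le
  · -- f is identically -1
    have hall : ∀ x, f x = -1 := fun x => (hf x).resolve_left (fun h => hp ⟨x, h⟩)
    refine ⟨fun _ => -1, fun _ => -1,
      (LipschitzWith.const (-1)).weaken zero_le,
      (LipschitzWith.const (-1)).weaken zero_le,
      fun _ => ⟨le_rfl, by norm_num⟩, fun _ => ⟨le_rfl, by norm_num⟩,
      fun x => by rw [hall x]; exact ⟨le_rfl, le_rfl⟩, ?_⟩
    have hz : (fun _ : EuclideanSpace ℝ (Fin d) => (-1:ℝ) - -1) = 0 := by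
      funext; simp
    rw [hz, eLpNorm_zero]
    exact zero_le
end

section
/- Let f : ℝ^d → {−1, 1} be a concept with f(x) = F(Wx) for all x, where F : ℝ^k → {−1, 1} and W ∈ ℝ^{k×d} satisfies WWᵀ = I_{k×k}. Then for every ρ ≥ 0 and every x ∈ ℝ^d one has f^{+ρ}(x) = F^{+ρ}(Wx) and f^{−ρ}(x) = F^{−ρ}(Wx). Consequently, if f has σ-smooth boundary with respect to a probability distribution D on ℝ^d, then F has σ-smooth boundary with respect to the pushforward of D under the map x ↦ Wx. -/
open MeasureTheory Matrix

private lemma norm_euc {n : ℕ} (v : Fin n → ℝ) :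
    ‖(WithLp.equiv 2 (Fin n → ℝ)).symm v‖ = Real.sqrt (v ⬝ᵥ v) := by
  rw [EuclideanSpace.norm_eq]
  congr 1
  simp [dotProduct, Real.norm_eq_abs, sq_abs, pow_two]

private lemma projMapAux {d k : ℕ} (W : Matrix (Fin k) (Fin d) ℝ) (hW : W * Wᵀ = 1) :
    (∀ z : Fin d → ℝ, Real.sqrt (W.mulVec z ⬝ᵥ W.mulVec z) ≤ Real.sqrt (z ⬝ᵥ z)) ∧
    (∀ u : Fin k → ℝ, Wᵀ.mulVec u ⬝ᵥ Wᵀ.mulVec u = u ⬝ᵥ u) := by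
  have hT : ∀ u : Fin k → ℝ, Wᵀ.mulVec u ⬝ᵥ Wᵀ.mulVec u = u ⬝ᵥ u := by
    intro u
    rw [Matrix.dotProduct_mulVec, Matrix.vecMul_transpose, Matrix.mulVec_mulVec, hW,
      Matrix.one_mulVec]
  refine ⟨fun z => ?_, hT⟩
  set u := W.mulVec z with hu
  have h1 : u ⬝ᵥ u = Wᵀ.mulVec u ⬝ᵥ z := by
    rw [hu, Matrix.dotProduct_mulVec, Matrix.mulVec_transpose]
  -- Cauchy-Schwarz via inner product
  have CS : Wᵀ.mulVec u ⬝ᵥ z ≤ Real.sqrt (Wᵀ.mulVec u ⬝ᵥ Wᵀ.mulVec u) * Real.sqrt (z ⬝ᵥ z) := by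
    have := real_inner_le_norm ((WithLp.equiv 2 (Fin d → ℝ)).symm (Wᵀ.mulVec u))
      ((WithLp.equiv 2 (Fin d → ℝ)).symm z)
    rw [norm_euc, norm_euc] at this
    simpa [PiLp.inner_apply, RCLike.inner_apply, dotProduct, mul_comm] using this
  rw [hT u] at CS
  have h2 : u ⬝ᵥ u ≤ Real.sqrt (u ⬝ᵥ u) * Real.sqrt (z ⬝ᵥ z) := h1 ▸ CS
  have hnn : 0 ≤ u ⬝ᵥ u := Finset.sum_nonneg (fun i _ => mul_self_nonneg (u i))
  nlinarith [Real.sq_sqrt hnn, Real.sqrt_nonneg (u ⬝ᵥ u), Real.sqrt_nonneg (z ⬝ᵥ z),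
    Real.sq_sqrt (Finset.sum_nonneg (fun i _ => mul_self_nonneg (z i)) : (0:ℝ) ≤ z ⬝ᵥ z)]

private lemma projMap_cont {d k : ℕ} (W : Matrix (Fin k) (Fin d) ℝ) : Continuous (projMap W) := by
  have h1 : Continuous (WithLp.equiv 2 (Fin d → ℝ)) := PiLp.continuous_ofLp 2 _
  have h2 : Continuous ((WithLp.equiv 2 (Fin k → ℝ)).symm) := PiLp.continuous_toLp 2 _
  have h3 : Continuous (W.mulVec) := (Matrix.mulVecLin W).continuous_of_finiteDimensional
  exact h2.comp (h3.comp h1)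

private lemma projMap_sub {d k : ℕ} (W : Matrix (Fin k) (Fin d) ℝ)
    (z x : EuclideanSpace ℝ (Fin d)) :
    projMap W z - projMap W x
      = (WithLp.equiv 2 (Fin k → ℝ)).symm (W.mulVec (WithLp.equiv 2 (Fin d → ℝ) (z - x))) := by
  simp [projMap, WithLp.ofLp_sub, WithLp.toLp_sub, Matrix.mulVec_sub]

private lemma img_ball {d k : ℕ} (W : Matrix (Fin k) (Fin d) ℝ) (hW : W * Wᵀ = 1)
    (x : EuclideanSpace ℝ (Fin d)) (ρ : ℝ) :
    projMap W '' Metric.closedBall x ρ = Metric.closedBall (projMap W x) ρ := by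
  obtain ⟨hle, hiso⟩ := projMapAux W hW
  ext y
  simp only [Set.mem_image, Metric.mem_closedBall]
  constructor
  · rintro ⟨z, hz, rfl⟩
    calc dist (projMap W z) (projMap W x)
        = ‖projMap W z - projMap W x‖ := dist_eq_norm _ _
      _ = Real.sqrt ((W.mulVec (WithLp.equiv 2 (Fin d → ℝ) (z - x))) ⬝ᵥ
            (W.mulVec (WithLp.equiv 2 (Fin d → ℝ) (z - x)))) := by
          rw [projMap_sub, norm_euc]
      _ ≤ Real.sqrt ((WithLp.equiv 2 (Fin d → ℝ) (z - x)) ⬝ᵥ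
            (WithLp.equiv 2 (Fin d → ℝ) (z - x))) := hle _
      _ = ‖(WithLp.equiv 2 (Fin d → ℝ)).symm (WithLp.equiv 2 (Fin d → ℝ) (z - x))‖ :=
          (norm_euc _).symm
      _ = ‖z - x‖ := by rw [Equiv.symm_apply_apply]
      _ = dist z x := (dist_eq_norm _ _).symm
      _ ≤ ρ := hz
  · intro hy
    set u : Fin k → ℝ := (WithLp.equiv 2 (Fin k → ℝ)) (y - projMap W x) with hu
    refine ⟨x + (WithLp.equiv 2 (Fin d → ℝ)).symm (Wᵀ.mulVec u), ?_, ?_⟩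
    · rw [dist_eq_norm, add_sub_cancel_left, norm_euc, hiso u,
        ← norm_euc, hu, Equiv.symm_apply_apply]
      calc ‖y - projMap W x‖ = dist y (projMap W x) := (dist_eq_norm _ _).symm
        _ ≤ ρ := hy
    · have hWu : W.mulVec (Wᵀ.mulVec u) = u := by
        rw [Matrix.mulVec_mulVec, hW, Matrix.one_mulVec]
      simp only [projMap, WithLp.equiv_apply, WithLp.equiv_symm_apply, WithLp.ofLp_add, WithLp.ofLp_toLp, Matrix.mulVec_add,
        hWu, WithLp.toLp_add]
      rw [hu]
      show projMap W x + (y - projMap W x) = y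
      abel

theorem statement_3 {d k : ℕ} (f : EuclideanSpace ℝ (Fin d) → ℝ)
    (F : EuclideanSpace ℝ (Fin k) → ℝ) (hF : IsConcept F)
    (W : Matrix (Fin k) (Fin d) ℝ) (hW : W * Wᵀ = 1)
    (hfF : ∀ x, f x = F (projMap W x)) :
    (∀ ρ : ℝ, 0 ≤ ρ → ∀ x,
        dilation f ρ x = dilation F ρ (projMap W x) ∧
        erosion f ρ x = erosion F ρ (projMap W x)) ∧
    (∀ D : Measure (EuclideanSpace ℝ (Fin d)), IsProbabilityMeasure D → ∀ σ : ℝ,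
        HasSmoothBoundary f D σ → HasSmoothBoundary F (D.map (projMap W)) σ) := by
  have key : ∀ ρ : ℝ, ∀ x,
      dilation f ρ x = dilation F ρ (projMap W x) ∧
      erosion f ρ x = erosion F ρ (projMap W x) := by
    intro ρ x
    have him : f '' Metric.closedBall x ρ = F '' Metric.closedBall (projMap W x) ρ := by
      rw [show f = F ∘ projMap W from funext hfF, Set.image_comp, img_ball W hW]
    exact ⟨by rw [dilation, dilation, him], by rw [erosion, erosion, him]⟩
  refine ⟨fun ρ _ x => key ρ x, fun D _ σ hsm ρ hρ => ?_⟩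
  calc ∫⁻ y, ENNReal.ofReal ((dilation F ρ y - erosion F ρ y) / 2) ∂(D.map (projMap W))
      ≤ ∫⁻ x, ENNReal.ofReal
          ((dilation F ρ (projMap W x) - erosion F ρ (projMap W x)) / 2) ∂D :=
        lintegral_map_le _ (projMap W)
    _ = ∫⁻ x, ENNReal.ofReal ((dilation f ρ x - erosion f ρ x) / 2) ∂D := by
        refine lintegral_congr fun x => ?_
        rw [(key ρ x).1, (key ρ x).2]
    _ ≤ ENNReal.ofReal (σ * ρ) := hsm ρ hρ
end

section
/- Let D be a probability distribution on ℝ^d that is α-anticoncentrated in every direction, let w₁, …, w_k ∈ ℝ^d be unit vectors, t₁, …, t_k ∈ ℝ, and let G : {−1,1}^k → {−1, 1} be arbitrary. Then the concept f(x) = G(sign(w₁·x − t₁), …, sign(w_k·x − t_k)) has (k·α)-smooth boundary with respect to D. -/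
open MeasureTheory Matrix

theorem statement_6 {d k : ℕ} (D : Measure (EuclideanSpace ℝ (Fin d))) [IsProbabilityMeasure D]
    (α : ℝ) (hD : Anticoncentrated D α)
    (w : Fin k → EuclideanSpace ℝ (Fin d)) (hw : ∀ i, ‖w i‖ = 1) (t : Fin k → ℝ)
    (G : (Fin k → ℝ) → ℝ)
    (hG : ∀ v : Fin k → ℝ, (∀ i, v i = 1 ∨ v i = -1) → (G v = 1 ∨ G v = -1)) :
    HasSmoothBoundary (fun x => G fun i => halfspaceSign (w i) (t i) x) D ((k : ℝ) * α) := by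
  intro ρ hρ
  classical
  set f : EuclideanSpace ℝ (Fin d) → ℝ := fun x => G fun i => halfspaceSign (w i) (t i) x with hf
  have hfval : ∀ y, f y = 1 ∨ f y = -1 := by
    intro y
    apply hG
    intro i
    unfold halfspaceSign
    split <;> simp
  set S : Set (EuclideanSpace ℝ (Fin d)) :=
    ⋃ i, {x | |(inner ℝ (w i) x : ℝ) - t i| ≤ ρ} with hS
  have hSi : ∀ i, MeasurableSet {x : EuclideanSpace ℝ (Fin d) | |(inner ℝ (w i) x : ℝ) - t i| ≤ ρ} := by
    intro i
    have hc : Continuous fun x : EuclideanSpace ℝ (Fin d) => |(inner ℝ (w i) x : ℝ) - t i| :=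
      ((continuous_const.inner continuous_id).sub continuous_const).abs
    exact (isClosed_le hc continuous_const).measurableSet
  have hSmeas : MeasurableSet S := MeasurableSet.iUnion hSi
  have hpt : ∀ x, ENNReal.ofReal ((dilation f ρ x - erosion f ρ x) / 2)
      ≤ S.indicator (fun _ => (1 : ENNReal)) x := by
    intro x
    have hxball : x ∈ Metric.closedBall x ρ := Metric.mem_closedBall_self hρ
    have hne : (f '' Metric.closedBall x ρ).Nonempty := ⟨f x, x, hxball, rfl⟩
    by_cases hx : x ∈ S
    · rw [Set.indicator_of_mem hx]
      have hbddA : ∀ u ∈ f '' Metric.closedBall x ρ, u ≤ 1 := by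
        rintro u ⟨y, -, rfl⟩
        rcases hfval y with h | h <;> rw [h] <;> norm_num
      have hbddB : ∀ u ∈ f '' Metric.closedBall x ρ, (-1 : ℝ) ≤ u := by
        rintro u ⟨y, -, rfl⟩
        rcases hfval y with h | h <;> rw [h] <;> norm_num
      have h1 : dilation f ρ x ≤ 1 := csSup_le hne hbddA
      have h2 : (-1 : ℝ) ≤ erosion f ρ x := le_csInf hne hbddB
      calc ENNReal.ofReal ((dilation f ρ x - erosion f ρ x) / 2)
          ≤ ENNReal.ofReal 1 := by
            apply ENNReal.ofReal_le_ofReal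
            linarith
        _ = 1 := ENNReal.ofReal_one
    · rw [Set.indicator_of_notMem hx]
      have hfar : ∀ i, ρ < |(inner ℝ (w i) x : ℝ) - t i| := by
        intro i
        by_contra h
        push_neg at h
        exact hx (Set.mem_iUnion.mpr ⟨i, h⟩)
      have hconst : ∀ y ∈ Metric.closedBall x ρ, f y = f x := by
        intro y hy
        have hkey : ∀ i, halfspaceSign (w i) (t i) y = halfspaceSign (w i) (t i) x := by
          intro i
          have hdiff : |(inner ℝ (w i) y : ℝ) - (inner ℝ (w i) x : ℝ)| ≤ ρ := by
            have : (inner ℝ (w i) y : ℝ) - (inner ℝ (w i) x : ℝ) = inner ℝ (w i) (y - x) := by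
              rw [inner_sub_right]
            rw [this]
            calc |(inner ℝ (w i) (y - x) : ℝ)| ≤ ‖w i‖ * ‖y - x‖ := abs_real_inner_le_norm _ _
              _ = ‖y - x‖ := by rw [hw i, one_mul]
              _ ≤ ρ := by rw [← dist_eq_norm]; exact Metric.mem_closedBall.mp hy
          unfold halfspaceSign
          rcases lt_or_ge ((inner ℝ (w i) x : ℝ) - t i) 0 with hneg | hpos
          · have hxρ : (inner ℝ (w i) x : ℝ) - t i < -ρ := by
              rcases abs_cases ((inner ℝ (w i) x : ℝ) - t i) with ⟨he, -⟩ | ⟨he, -⟩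
              · linarith [hfar i]
              · linarith [hfar i]
            have hy0 : (inner ℝ (w i) y : ℝ) - t i < 0 := by
              rcases abs_le.mp hdiff with ⟨h1, h2⟩
              linarith
            rw [if_neg (by linarith), if_neg (by linarith)]
          · have hxρ : ρ < (inner ℝ (w i) x : ℝ) - t i := by
              rcases abs_cases ((inner ℝ (w i) x : ℝ) - t i) with ⟨he, -⟩ | ⟨he, -⟩
              · linarith [hfar i]
              · linarith [hfar i]
            have hy0 : 0 ≤ (inner ℝ (w i) y : ℝ) - t i := by
              rcases abs_le.mp hdiff with ⟨h1, h2⟩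
              linarith
            rw [if_pos hy0, if_pos hpos]
        show G _ = G _
        congr 1
        funext i
        exact hkey i
      have himg : f '' Metric.closedBall x ρ = {f x} := by
        apply Set.eq_singleton_iff_nonempty_unique_mem.mpr
        refine ⟨hne, ?_⟩
        rintro u ⟨y, hy, rfl⟩
        exact hconst y hy
      have hd : dilation f ρ x = f x := by rw [dilation, himg, csSup_singleton]
      have he : erosion f ρ x = f x := by rw [erosion, himg, csInf_singleton]
      simp [hd, he]
  calc ∫⁻ x, ENNReal.ofReal ((dilation f ρ x - erosion f ρ x) / 2) ∂D
      ≤ ∫⁻ x, S.indicator (fun _ => (1 : ENNReal)) x ∂D := lintegral_mono hpt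
    _ = D S := by rw [lintegral_indicator hSmeas]; simp
    _ ≤ ∑' i, D {x | |(inner ℝ (w i) x : ℝ) - t i| ≤ ρ} := measure_iUnion_le _
    _ = ∑ i, D {x | |(inner ℝ (w i) x : ℝ) - t i| ≤ ρ} := tsum_fintype _
    _ ≤ ∑ _i : Fin k, ENNReal.ofReal (α * ρ) :=
        Finset.sum_le_sum fun i _ => hD (w i) (hw i) (t i) ρ hρ
    _ = (k : ENNReal) * ENNReal.ofReal (α * ρ) := by
        rw [Finset.sum_const, Finset.card_univ, Fintype.card_fin, nsmul_eq_mul]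
    _ ≤ ENNReal.ofReal ((k : ℝ) * α * ρ) := by
        rcases le_or_gt 0 (α * ρ) with hpos | hneg
        · rw [mul_assoc, ENNReal.ofReal_mul (by positivity : (0:ℝ) ≤ (k:ℝ))]
          simp
        · rw [ENNReal.ofReal_eq_zero.mpr hneg.le, mul_zero]
          exact zero_le
end
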